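/- For every natural number r ≥ 1, the polynomial (β² − 64)^{N_r} belongs to the ideal J_r of ℂ[α,β,γ], where N_r = Σ_{s=1}^{r} ⌈s/2⌉ and ⌈s/2⌉ denotes the least integer ≥ s/2. -/
import Mathlib

open MvPolynomial

/-- The triple (R¹_r, R²_r, R³_r) of polynomials in ℂ[α,β,γ] (α = X 0, β = X 1, γ = X 2). -/
noncomputable def Rr : ℕ → MvPolynomial (Fin 3) ℂ × MvPolynomial (Fin 3) ℂ × MvPolynomial (Fin 3) ℂ
  | 0 => (1, 0, 0)
  | (r + 1) =>
      (X 0 * (Rr r).1 + C ((r : ℂ) ^ 2) * (Rr r).2.1,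
       (X 1 + C ((-1 : ℂ) ^ (r + 1) * 8)) * (Rr r).1 + C ((2 * r : ℂ) / (r + 1)) * (Rr r).2.2,
       X 2 * (Rr r).1)

/-- The ideal J_r = (R¹_r, R²_r, R³_r) ⊆ ℂ[α,β,γ]. -/
noncomputable def Jr (r : ℕ) : Ideal (MvPolynomial (Fin 3) ℂ) :=
  Ideal.span {(Rr r).1, (Rr r).2.1, (Rr r).2.2}

lemma Rr_zero : Rr 0 = (1, 0, 0) := rfl

lemma Rr_succ (r : ℕ) : Rr (r+1) =
      (X 0 * (Rr r).1 + C ((r : ℂ) ^ 2) * (Rr r).2.1,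
       (X 1 + C ((-1 : ℂ) ^ (r + 1) * 8)) * (Rr r).1 + C ((2 * r : ℂ) / (r + 1)) * (Rr r).2.2,
       X 2 * (Rr r).1) := rfl

/-- D = β² - 64. -/
noncomputable def Dp : MvPolynomial (Fin 3) ℂ := (X 1)^2 - C 64

lemma mem_Jr_of_eq {r : ℕ} (u v w : MvPolynomial (Fin 3) ℂ) {x : MvPolynomial (Fin 3) ℂ}
    (h : x = u * (Rr r).1 + v * (Rr r).2.1 + w * (Rr r).2.2) : x ∈ Jr r := by
  rw [h]
  refine add_mem (add_mem ?_ ?_) ?_ <;>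
    exact Ideal.mul_mem_left _ _ (Ideal.subset_span (by simp))

lemma Jr_elim {r : ℕ} {x : MvPolynomial (Fin 3) ℂ} (h : x ∈ Jr r) :
    ∃ u v w, x = u * (Rr r).1 + v * (Rr r).2.1 + w * (Rr r).2.2 := by
  rw [Jr, Ideal.span, Submodule.mem_span_insert] at h
  obtain ⟨u, z, hz, rfl⟩ := h
  rw [Submodule.mem_span_insert] at hz
  obtain ⟨v, z2, hz2, rfl⟩ := hz
  rw [Submodule.mem_span_singleton] at hz2
  obtain ⟨w, rfl⟩ := hz2
  exact ⟨u, v, w, by simp [smul_eq_mul]; ring⟩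

/-- t_k * t_{k+1} = D. -/
lemma tt_mul (k : ℕ) :
    (X 1 + C ((-1 : ℂ) ^ k * 8)) * (X 1 + C ((-1 : ℂ) ^ (k+1) * 8)) = Dp := by
  have hsum : ((-1:ℂ)^k*8) + ((-1)^(k+1)*8) = 0 := by rw [pow_succ]; ring
  have hprod : ((-1:ℂ)^k*8) * ((-1)^(k+1)*8) = -64 := by
    have h2 : ((-1:ℂ)^k)^2 = 1 := by
      rw [← pow_mul, mul_comm, pow_mul]; norm_num
    rw [pow_succ]; linear_combination (-64:ℂ) * h2
  have h1 : (C ((-1:ℂ)^k*8) : MvPolynomial (Fin 3) ℂ) + C ((-1)^(k+1)*8) = 0 := by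
    rw [← C_add, hsum, C_0]
  have h2 : (C ((-1:ℂ)^k*8) : MvPolynomial (Fin 3) ℂ) * C ((-1)^(k+1)*8) = -C 64 := by
    rw [← C_mul, hprod, map_neg]
  rw [Dp]
  linear_combination (X 1 : MvPolynomial (Fin 3) ℂ) * h1 + h2

/-- Q_{m+1} expressed through P_{m+2} and P_{m+1}. -/
lemma Q_rel (m : ℕ) :
    (Rr (m+1)).2.1 =
      C ((1:ℂ)/((m+1 : ℕ) : ℂ)^2) * ((Rr (m+2)).1 - X 0 * (Rr (m+1)).1) := by
  have h : (Rr (m+2)).1 = X 0 * (Rr (m+1)).1 + C (((m+1 : ℕ) : ℂ)^2) * (Rr (m+1)).2.1 := rfl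
  have hne : ((m+1 : ℕ) : ℂ) ≠ 0 := Nat.cast_ne_zero.mpr (Nat.succ_ne_zero m)
  have hc : (C ((1:ℂ)/((m+1 : ℕ) : ℂ)^2) * C (((m+1 : ℕ) : ℂ)^2) : MvPolynomial (Fin 3) ℂ) = 1 := by
    rw [← C_mul]
    rw [div_mul_cancel₀ _ (pow_ne_zero 2 hne), C_1]
  rw [h]
  linear_combination (-(Rr (m+1)).2.1) * hc

/-- γ·P_r ∈ J_{r+1}. -/
lemma L1 (r : ℕ) : X 2 * (Rr r).1 ∈ Jr (r+1) :=
  mem_Jr_of_eq 0 0 1 (by rw [Rr_succ]; ring)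

/-- γ·Q_{m+1} ∈ J_{m+2}. -/
lemma L2 (m : ℕ) : X 2 * (Rr (m+1)).2.1 ∈ Jr (m+2) := by
  have hS : (Rr (m+2)).2.2 = X 2 * (Rr (m+1)).1 := rfl
  refine mem_Jr_of_eq (C ((1:ℂ)/((m+1 : ℕ) : ℂ)^2) * X 2) 0
    (-(C ((1:ℂ)/((m+1 : ℕ) : ℂ)^2) * X 0)) ?_
  rw [Q_rel m, hS]; ring

/-- γ·S_{m+1} ∈ J_{m+2}. -/
lemma L3 (m : ℕ) : X 2 * (Rr (m+1)).2.2 ∈ Jr (m+2) := by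
  have hQ : (Rr (m+2)).2.1 =
      (X 1 + C ((-1 : ℂ) ^ (m+1+1) * 8)) * (Rr (m+1)).1
        + C ((2 * (m+1 : ℕ) : ℂ) / ((m+1 : ℕ) + 1)) * (Rr (m+1)).2.2 := rfl
  have hS : (Rr (m+2)).2.2 = X 2 * (Rr (m+1)).1 := rfl
  have hne1 : ((m+1 : ℕ) : ℂ) ≠ 0 := Nat.cast_ne_zero.mpr (Nat.succ_ne_zero m)
  have hne2 : ((m+1 : ℕ) : ℂ) + 1 ≠ 0 := by
    have h0 : (((m+2 : ℕ)) : ℂ) ≠ 0 := Nat.cast_ne_zero.mpr (Nat.succ_ne_zero _)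
    push_cast at h0 ⊢
    intro hc
    exact h0 (by linear_combination hc)
  have hc : (C ((((m+1 : ℕ) : ℂ) + 1) / (2 * ((m+1 : ℕ) : ℂ)))
      * C ((2 * (m+1 : ℕ) : ℂ) / ((m+1 : ℕ) + 1)) : MvPolynomial (Fin 3) ℂ) = 1 := by
    rw [← C_mul]
    have ha : ((m:ℂ)+1) ≠ 0 := by
      have h0 := hne1; push_cast at h0; exact h0
    have hb : ((m:ℂ)+1+1) ≠ 0 := by
      have h0 := hne2; push_cast at h0; exact h0
    have : (((m+1 : ℕ) : ℂ) + 1) / (2 * ((m+1 : ℕ) : ℂ))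
        * ((2 * (m+1 : ℕ) : ℂ) / ((m+1 : ℕ) + 1)) = 1 := by
      push_cast
      rw [div_mul_div_comm, div_eq_one_iff_eq (mul_ne_zero (mul_ne_zero two_ne_zero ha) hb)]
      ring
    rw [this, C_1]
  set d : MvPolynomial (Fin 3) ℂ := C ((((m+1 : ℕ) : ℂ) + 1) / (2 * ((m+1 : ℕ) : ℂ))) with hd
  refine mem_Jr_of_eq 0 (d * X 2) (-(d * (X 1 + C ((-1 : ℂ) ^ (m+1+1) * 8)))) ?_
  rw [hQ, hS]
  linear_combination (-(X 2 * (Rr (m+1)).2.2)) * hc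

/-- γ·J_{m+1} ⊆ J_{m+2}. -/
lemma gamma_mem (m : ℕ) {x : MvPolynomial (Fin 3) ℂ} (hx : x ∈ Jr (m+1)) :
    X 2 * x ∈ Jr (m+2) := by
  obtain ⟨u, v, w, rfl⟩ := Jr_elim hx
  have h : X 2 * (u * (Rr (m+1)).1 + v * (Rr (m+1)).2.1 + w * (Rr (m+1)).2.2)
      = u * (X 2 * (Rr (m+1)).1) + v * (X 2 * (Rr (m+1)).2.1) + w * (X 2 * (Rr (m+1)).2.2) := by
    ring
  rw [h]
  exact add_mem (add_mem (Ideal.mul_mem_left _ _ (L1 (m+1))) (Ideal.mul_mem_left _ _ (L2 m)))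
    (Ideal.mul_mem_left _ _ (L3 m))

lemma h8 : (C (8:ℂ) : MvPolynomial (Fin 3) ℂ) * C (8:ℂ) = C 64 := by
  rw [← C_mul]; norm_num

/-- D^{⌈(r+1)/2⌉}·P_r ∈ J_{r+1}. -/
lemma phi : ∀ r : ℕ, Dp ^ ((r+2)/2) * (Rr r).1 ∈ Jr (r+1) := by
  intro r
  induction r using Nat.twoStepInduction with
  | zero =>
    show Dp ^ 1 * (Rr 0).1 ∈ Jr 1
    refine mem_Jr_of_eq 0 (X 1 + C 8) 0 ?_
    have h := tt_mul 0
    norm_num at h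
    simp only [Rr_succ, Rr_zero]
    norm_num
    linear_combination -h
  | one =>
    show Dp ^ 1 * (Rr 1).1 ∈ Jr 2
    refine mem_Jr_of_eq ((X 1 + C 8) * X 0) (-(X 0^2)) (X 0) ?_
    have h := tt_mul 0
    norm_num at h
    simp only [Rr_succ, Rr_zero]
    norm_num
    linear_combination (-(X 0 : MvPolynomial (Fin 3) ℂ)) * h
  | more r ih _ =>
    have hdiv : (r+2+2)/2 = (r+2)/2 + 1 := by omega
    rw [hdiv, pow_succ, mul_assoc]
    have hQ3 : (Rr (r+3)).2.1 =
        (X 1 + C ((-1 : ℂ) ^ (r+2+1) * 8)) * (Rr (r+2)).1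
          + C ((2 * (r+2 : ℕ) : ℂ) / ((r+2 : ℕ) + 1)) * (Rr (r+2)).2.2 := rfl
    have hS2 : (Rr (r+2)).2.2 = X 2 * (Rr (r+1)).1 := rfl
    have hQ2 : (Rr (r+2)).2.1 =
        (X 1 + C ((-1 : ℂ) ^ (r+1+1) * 8)) * (Rr (r+1)).1
          + C ((2 * (r+1 : ℕ) : ℂ) / ((r+1 : ℕ) + 1)) * (Rr (r+1)).2.2 := rfl
    have hS1 : (Rr (r+1)).2.2 = X 2 * (Rr r).1 := rfl
    have htt := tt_mul (r+2)
    have key : Dp * (Rr (r+2)).1 =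
        (X 1 + C ((-1 : ℂ) ^ (r+2) * 8)) * (Rr (r+3)).2.1
          - C ((2 * (r+2 : ℕ) : ℂ) / ((r+2 : ℕ) + 1)) * (X 2 * (Rr (r+2)).2.1)
          + C ((2 * (r+2 : ℕ) : ℂ) / ((r+2 : ℕ) + 1))
              * (C ((2 * (r+1 : ℕ) : ℂ) / ((r+1 : ℕ) + 1)) * (X 2 * (X 2 * (Rr r).1))) := by
      rw [hQ3, hQ2, hS2, hS1]
      linear_combination (-(Rr (r+2)).1) * htt
    rw [key]
    have m1 : (X 1 + C ((-1 : ℂ) ^ (r+2) * 8)) * (Rr (r+3)).2.1 ∈ Jr (r+3) :=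
      Ideal.mul_mem_left _ _ (Ideal.subset_span (by simp))
    have m2 : X 2 * (Rr (r+2)).2.1 ∈ Jr (r+3) := L2 (r+1)
    have m3 : X 2 * (X 2 * (Dp ^ ((r+2)/2) * (Rr r).1)) ∈ Jr (r+3) :=
      gamma_mem (r+1) (gamma_mem r ih)
    have hrw : Dp ^ ((r+2)/2) *
        ((X 1 + C ((-1 : ℂ) ^ (r+2) * 8)) * (Rr (r+3)).2.1
          - C ((2 * (r+2 : ℕ) : ℂ) / ((r+2 : ℕ) + 1)) * (X 2 * (Rr (r+2)).2.1)
          + C ((2 * (r+2 : ℕ) : ℂ) / ((r+2 : ℕ) + 1))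
              * (C ((2 * (r+1 : ℕ) : ℂ) / ((r+1 : ℕ) + 1)) * (X 2 * (X 2 * (Rr r).1))))
        = Dp ^ ((r+2)/2) * ((X 1 + C ((-1 : ℂ) ^ (r+2) * 8)) * (Rr (r+3)).2.1)
          - (Dp ^ ((r+2)/2) * C ((2 * (r+2 : ℕ) : ℂ) / ((r+2 : ℕ) + 1))) * (X 2 * (Rr (r+2)).2.1)
          + (C ((2 * (r+2 : ℕ) : ℂ) / ((r+2 : ℕ) + 1)) * C ((2 * (r+1 : ℕ) : ℂ) / ((r+1 : ℕ) + 1)))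
              * (X 2 * (X 2 * (Dp ^ ((r+2)/2) * (Rr r).1))) := by
      ring
    rw [hrw]
    exact add_mem (sub_mem (Ideal.mul_mem_left _ _ m1) (Ideal.mul_mem_left _ _ m2))
      (Ideal.mul_mem_left _ _ m3)

/-- D^{⌈(r+1)/2⌉}·J_r ⊆ J_{r+1} for r ≥ 1. -/
lemma step (m : ℕ) {x : MvPolynomial (Fin 3) ℂ} (hx : x ∈ Jr (m+1)) :
    Dp ^ ((m+3)/2) * x ∈ Jr (m+2) := by
  obtain ⟨u, v, w, rfl⟩ := Jr_elim hx
  have hP : Dp ^ ((m+3)/2) * (Rr (m+1)).1 ∈ Jr (m+2) := phi (m+1)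
  have hQ : Dp ^ ((m+3)/2) * (Rr (m+1)).2.1 ∈ Jr (m+2) := by
    have h : Dp ^ ((m+3)/2) * (Rr (m+1)).2.1
        = (C ((1:ℂ)/((m+1 : ℕ) : ℂ)^2) * Dp ^ ((m+3)/2)) * (Rr (m+2)).1
          - (C ((1:ℂ)/((m+1 : ℕ) : ℂ)^2) * X 0) * (Dp ^ ((m+3)/2) * (Rr (m+1)).1) := by
      rw [Q_rel m]; ring
    rw [h]
    exact sub_mem (Ideal.mul_mem_left _ _ (Ideal.subset_span (by simp)))
      (Ideal.mul_mem_left _ _ hP)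
  have hS : Dp ^ ((m+3)/2) * (Rr (m+1)).2.2 ∈ Jr (m+2) := by
    have hle : (m+2)/2 ≤ (m+3)/2 := Nat.div_le_div_right (by omega)
    have hpow : Dp ^ ((m+3)/2) = Dp ^ ((m+3)/2 - (m+2)/2) * Dp ^ ((m+2)/2) := by
      rw [← pow_add, Nat.sub_add_cancel hle]
    have hSdef : (Rr (m+1)).2.2 = X 2 * (Rr m).1 := rfl
    have hmem : X 2 * (Dp ^ ((m+2)/2) * (Rr m).1) ∈ Jr (m+2) := gamma_mem m (phi m)
    have h : Dp ^ ((m+3)/2) * (Rr (m+1)).2.2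
        = Dp ^ ((m+3)/2 - (m+2)/2) * (X 2 * (Dp ^ ((m+2)/2) * (Rr m).1)) := by
      rw [hSdef, hpow]; ring
    rw [h]
    exact Ideal.mul_mem_left _ _ hmem
  have h : Dp ^ ((m+3)/2) * (u * (Rr (m+1)).1 + v * (Rr (m+1)).2.1 + w * (Rr (m+1)).2.2)
      = u * (Dp ^ ((m+3)/2) * (Rr (m+1)).1) + v * (Dp ^ ((m+3)/2) * (Rr (m+1)).2.1)
        + w * (Dp ^ ((m+3)/2) * (Rr (m+1)).2.2) := by ring
  rw [h]
  exact add_mem (add_mem (Ideal.mul_mem_left _ _ hP) (Ideal.mul_mem_left _ _ hQ))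
    (Ideal.mul_mem_left _ _ hS)

/-- For every r ≥ 1, the polynomial (β² − 64)^{N_r} belongs to the ideal J_r of ℂ[α,β,γ],
where N_r = Σ_{s=1}^{r} ⌈s/2⌉ (and ⌈s/2⌉ = (s+1)/2 in natural-number division). -/
theorem stmt18 (r : ℕ) (hr : 1 ≤ r) :
    ((X 1 : MvPolynomial (Fin 3) ℂ) ^ 2 - C 64) ^ (∑ s ∈ Finset.Icc 1 r, (s + 1) / 2) ∈ Jr r := by
  show Dp ^ (∑ s ∈ Finset.Icc 1 r, (s + 1) / 2) ∈ Jr r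
  induction r, hr using Nat.le_induction with
  | base =>
    have h : (∑ s ∈ Finset.Icc 1 1, (s + 1) / 2) = 1 := by decide
    rw [h]
    simpa [Rr_zero] using phi 0
  | succ r hr ih =>
    have h : (∑ s ∈ Finset.Icc 1 (r+1), (s + 1) / 2)
        = (∑ s ∈ Finset.Icc 1 r, (s + 1) / 2) + (r+2)/2 := by
      rw [Finset.sum_Icc_succ_top (by omega : 1 ≤ r + 1)]
    rw [h, pow_add, mul_comm]
    obtain ⟨m, rfl⟩ : ∃ m, r = m + 1 := ⟨r - 1, by omega⟩
    exact step m ih
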